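/- Let K₀ ≠ 0 and F₀ ≥ 0 with a₀ := (F₀/K₀)^{1/3} > 0. Suppose λ is differentiable and positive on an interval I ⊆ [0,∞) containing 0, satisfies λ'(t) = -(2/3)·K₀·(1 - a₀³·λ(t)⁻³) for all t ∈ I, and λ(t) ≠ a₀ for all t ∈ I. Then, with G(x) := a₀·log(|x - a₀|^{1/3} / (x² + a₀·x + a₀²)^{1/6}) - (a₀/√3)·arctan((2·x + a₀)/(√3·a₀)) + x, one has G(λ(t)) = -(2/3)·K₀·t + G(λ(0)) for all t ∈ I. -/

import Mathlib

/-- The antiderivative `G` used for the implicit solution of the reduced normalized ODE. -/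
noncomputable def G (a₀ : ℝ) : ℝ → ℝ := fun x =>
  a₀ * Real.log (|x - a₀| ^ ((1:ℝ)/3) / (x^2 + a₀ * x + a₀^2) ^ ((1:ℝ)/6))
    - (a₀ / Real.sqrt 3) * Real.arctan ((2 * x + a₀) / (Real.sqrt 3 * a₀)) + x

lemma hasDerivAt_G (a₀ : ℝ) (ha₀ : 0 < a₀) (x : ℝ) (hx : x ≠ a₀) :
    HasDerivAt (G a₀) (x^3 / (x^3 - a₀^3)) x := by
  have hs3 : (0:ℝ) < Real.sqrt 3 := Real.sqrt_pos.mpr (by norm_num)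
  have h3 : (Real.sqrt 3)^2 = 3 := Real.sq_sqrt (by norm_num)
  have hQ : 0 < x^2 + a₀*x + a₀^2 := by nlinarith [sq_nonneg (2*x + a₀), sq_nonneg a₀]
  have hxa : x - a₀ ≠ 0 := sub_ne_zero.mpr hx
  set g : ℝ → ℝ := fun y =>
      a₀ * ((1/3) * Real.log (y - a₀) - (1/6) * Real.log (y^2 + a₀*y + a₀^2))
      - (a₀ / Real.sqrt 3) * Real.arctan ((2*y + a₀) / (Real.sqrt 3 * a₀)) + y with hg_def
  have heq : G a₀ =ᶠ[nhds x] g := by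
    filter_upwards [IsOpen.mem_nhds isOpen_ne hx] with y hy
    have hya : y - a₀ ≠ 0 := sub_ne_zero.mpr hy
    have habs : (0:ℝ) < |y - a₀| := abs_pos.mpr hya
    have hQy : 0 < y^2 + a₀*y + a₀^2 := by nlinarith [sq_nonneg (2*y + a₀), sq_nonneg a₀]
    have h1 : (0:ℝ) < |y - a₀| ^ ((1:ℝ)/3) := Real.rpow_pos_of_pos habs _
    have h2 : (0:ℝ) < (y^2 + a₀*y + a₀^2) ^ ((1:ℝ)/6) := Real.rpow_pos_of_pos hQy _
    simp only [G, hg_def]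
    rw [Real.log_div h1.ne' h2.ne', Real.log_rpow habs, Real.log_rpow hQy, Real.log_abs]
  have hlog1 : HasDerivAt (fun y : ℝ => Real.log (y - a₀)) ((x - a₀)⁻¹ * 1) x :=
    by have h := (Real.hasDerivAt_log hxa).comp x ((hasDerivAt_id x).sub_const a₀); exact h
  have hQder : HasDerivAt (fun y : ℝ => y^2 + a₀*y + a₀^2) (2*x + a₀) x := by
    have h := ((hasDerivAt_pow 2 x).add (((hasDerivAt_id x).const_mul a₀))).add_const (a₀^2)
    refine h.congr_deriv ?_
    simp
  have hlog2 : HasDerivAt (fun y : ℝ => Real.log (y^2 + a₀*y + a₀^2))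
      ((x^2 + a₀*x + a₀^2)⁻¹ * (2*x + a₀)) x :=
    by have h := (Real.hasDerivAt_log hQ.ne').comp x hQder; exact h
  have huder : HasDerivAt (fun y : ℝ => (2*y + a₀) / (Real.sqrt 3 * a₀))
      (2 * 1 / (Real.sqrt 3 * a₀)) x :=
    (((hasDerivAt_id x).const_mul 2).add_const a₀).div_const (Real.sqrt 3 * a₀)
  have harc : HasDerivAt (fun y : ℝ => Real.arctan ((2*y + a₀) / (Real.sqrt 3 * a₀)))
      (1 / (1 + ((2*x + a₀) / (Real.sqrt 3 * a₀))^2) * (2 * 1 / (Real.sqrt 3 * a₀))) x :=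
    by have h := (Real.hasDerivAt_arctan ((2*x + a₀) / (Real.sqrt 3 * a₀))).comp x huder; exact h
  have hgder : HasDerivAt g
      (a₀ * ((1/3) * ((x - a₀)⁻¹ * 1) - (1/6) * ((x^2 + a₀*x + a₀^2)⁻¹ * (2*x + a₀)))
        - (a₀ / Real.sqrt 3) * (1 / (1 + ((2*x + a₀) / (Real.sqrt 3 * a₀))^2)
            * (2 * 1 / (Real.sqrt 3 * a₀))) + 1) x :=
    (((((hlog1.const_mul (1/3)).sub (hlog2.const_mul (1/6))).const_mul a₀).sub
      (harc.const_mul (a₀ / Real.sqrt 3))).add (hasDerivAt_id x))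
  have h1 : 1 + ((2*x + a₀) / (Real.sqrt 3 * a₀))^2
      = 4*(x^2 + a₀*x + a₀^2)/(3*a₀^2) := by
    rw [div_pow, mul_pow, h3]
    field_simp
    ring
  have h2 : (a₀ / Real.sqrt 3) * (1/(4*(x^2 + a₀*x + a₀^2)/(3*a₀^2))
        * (2*1/(Real.sqrt 3 * a₀)))
      = a₀^2/(2*(x^2 + a₀*x + a₀^2)) := by
    rw [one_div, inv_div]
    field_simp
    ring_nf
    rw [h3]; ring
  have hval : a₀ * ((1/3) * ((x - a₀)⁻¹ * 1) - (1/6) * ((x^2 + a₀*x + a₀^2)⁻¹ * (2*x + a₀)))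
        - (a₀ / Real.sqrt 3) * (1 / (1 + ((2*x + a₀) / (Real.sqrt 3 * a₀))^2)
            * (2 * 1 / (Real.sqrt 3 * a₀))) + 1 = x^3 / (x^3 - a₀^3) := by
    rw [h1, h2]
    have hden : x^3 - a₀^3 ≠ 0 := by
      have h : x^3 - a₀^3 = (x - a₀) * (x^2 + a₀*x + a₀^2) := by ring
      rw [h]; exact mul_ne_zero hxa hQ.ne'
    have hQ' : x * (x + a₀) + a₀ ^ 2 ≠ 0 := by
      rw [show x * (x + a₀) + a₀ ^ 2 = x^2 + a₀*x + a₀^2 by ring]; exact hQ.ne'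
    field_simp
    ring
  rw [← hval]
  exact hgder.congr_of_eventuallyEq heq

/-- Along any positive solution `λ` of the reduced normalized ODE
`λ'(t) = -(2/3)K₀(1 - a₀³ λ(t)⁻³)` on an interval `I ⊆ [0,∞)` containing `0`, with
`λ(t) ≠ a₀` throughout, one has `G(λ(t)) = -(2/3)K₀ t + G(λ(0))`. -/
theorem stmt_4 (K₀ F₀ : ℝ) (hK₀ : K₀ ≠ 0) (hF₀ : 0 ≤ F₀) (a₀ : ℝ)
    (ha₀ : a₀ = (F₀ / K₀) ^ ((1:ℝ)/3)) (ha₀pos : 0 < a₀)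
    (I : Set ℝ) (hI : I ⊆ Set.Ici 0) (h0I : (0:ℝ) ∈ I) (hIconn : I.OrdConnected)
    (lam : ℝ → ℝ) (hpos : ∀ t ∈ I, 0 < lam t)
    (hode : ∀ t ∈ I,
      HasDerivWithinAt lam (-(2/3) * K₀ * (1 - a₀^3 * ((lam t)^3)⁻¹)) I t)
    (hne : ∀ t ∈ I, lam t ≠ a₀) :
    ∀ t ∈ I, G a₀ (lam t) = -(2/3) * K₀ * t + G a₀ (lam 0) := by
  intro t ht
  set H : ℝ → ℝ := fun s => G a₀ (lam s) + (2/3) * K₀ * s with hH_def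
  have hHder : ∀ s ∈ I, HasDerivWithinAt H 0 I s := by
    intro s hs
    have hGd := hasDerivAt_G a₀ ha₀pos (lam s) (hne s hs)
    have hcomp := hGd.comp_hasDerivWithinAt s (hode s hs)
    have hlin : HasDerivWithinAt (fun s : ℝ => (2/3) * K₀ * s) ((2/3) * K₀) I s := by
      simpa using ((hasDerivWithinAt_id s I).const_mul ((2/3) * K₀))
    have h := hcomp.add hlin
    refine h.congr_deriv ?_
    have hl : 0 < lam s := hpos s hs
    have hQ : 0 < (lam s)^2 + a₀ * lam s + a₀^2 := by positivity
    have hden : (lam s)^3 - a₀^3 ≠ 0 := by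
      have heq : (lam s)^3 - a₀^3 = (lam s - a₀) * ((lam s)^2 + a₀ * lam s + a₀^2) := by ring
      rw [heq]; exact mul_ne_zero (sub_ne_zero.mpr (hne s hs)) hQ.ne'
    field_simp
    ring
  have hconv : Convex ℝ I := hIconn.convex
  have hbound : ∀ s ∈ I, ‖(fun _ : ℝ => (0:ℝ)) s‖ ≤ 0 := by intro s _; simp
  have hle := hconv.norm_image_sub_le_of_norm_hasDerivWithin_le
    (f := H) (f' := fun _ => 0) hHder hbound h0I ht
  have hHeq : H t = H 0 := by
    have h0 : ‖H t - H 0‖ ≤ 0 := by simpa using hle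
    have h1 : H t - H 0 = 0 := by
      rw [← norm_eq_zero]
      exact le_antisymm h0 (norm_nonneg _)
    linarith [sub_eq_zero.mp h1]
  simp only [hH_def] at hHeq
  linarith [hHeq]
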